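/- arXiv:2110.10972 — 2 statements merged into one kernel-verified Lean document; each statement's English description precedes it below -/
import Mathlib

section
/- For probability measures μ, ν on ℝ^d with finite second moments both supported on the same line through the origin (the first coordinate axis), the squared sliced-Wasserstein distance equals the squared Wasserstein distance divided by d: SW₂²(μ,ν) = W₂²(μ,ν)/d. -/
open MeasureTheory Metric ProbabilityTheory
open scoped ENNReal NNReal RealInnerProductSpace Topology

noncomputable section

abbrev Euc (d : ℕ) := EuclideanSpace ℝ (Fin d)

/-- Squared 2-Wasserstein distance (infimum over couplings). -/
def W2sq {X : Type*} [NormedAddCommGroup X] [MeasurableSpace X] (μ ν : Measure X) : ℝ≥0∞ :=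
  ⨅ γ ∈ {γ : Measure (X × X) | γ.map Prod.fst = μ ∧ γ.map Prod.snd = ν},
    ∫⁻ p, ENNReal.ofReal (‖p.1 - p.2‖ ^ 2) ∂γ

/-- 2-Wasserstein distance. -/
def W2 {X : Type*} [NormedAddCommGroup X] [MeasurableSpace X] (μ ν : Measure X) : ℝ :=
  Real.sqrt (W2sq μ ν).toReal

/-- Projection onto direction θ. -/
def proj {d : ℕ} (θ : Euc d) (x : Euc d) : ℝ := ⟪θ, x⟫

/-- Uniform probability measure on the unit sphere (normalized Hausdorff measure). -/
def sphereUniform (d : ℕ) : Measure (Euc d) :=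
  (μH[(d : ℝ) - 1] (sphere (0 : Euc d) 1))⁻¹ •
    (μH[(d : ℝ) - 1]).restrict (sphere (0 : Euc d) 1)

/-- Squared sliced-Wasserstein distance. -/
def SW2sq {d : ℕ} (μ ν : Measure (Euc d)) : ℝ≥0∞ :=
  ∫⁻ θ, W2sq (μ.map (proj θ)) (ν.map (proj θ)) ∂(sphereUniform d)

/-- Sliced-Wasserstein distance. -/
def SW2 {d : ℕ} (μ ν : Measure (Euc d)) : ℝ := Real.sqrt (SW2sq μ ν).toReal

/-- Gaussian on ℝ^d with diagonal covariance D. -/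
def diagGaussian {d : ℕ} (m : Euc d) (D : Fin d → ℝ≥0) : Measure (Euc d) :=
  (Measure.pi fun i => gaussianReal (m i) (D i)).map
    (MeasurableEquiv.toLp 2 (Fin d → ℝ))

/-- Isotropic Gaussian N(m, v I_d) (v the common variance). -/
def isoGaussian {d : ℕ} (m : Euc d) (v : ℝ≥0) : Measure (Euc d) :=
  diagGaussian m fun _ => v

/-- Mean of a measure on ℝ^d. -/
def meanOf {d : ℕ} (μ : Measure (Euc d)) : Euc d := ∫ x, x ∂μ

/-- Centered version of a measure. -/
def centered {d : ℕ} (μ : Measure (Euc d)) : Measure (Euc d) :=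
  μ.map fun x => x - meanOf μ

/-- Quantile function (generalized inverse cdf). -/
def quantile (μ : Measure ℝ) (z : ℝ) : ℝ := sInf {x | z ≤ cdf μ x}

/-- Embedding of ℝ as the first coordinate axis of ℝ^d. -/
def axisEmbed (d : ℕ) [NeZero d] (t : ℝ) : Euc d := EuclideanSpace.single 0 t

/-- Probability measures supported in K. -/
def InP {d : ℕ} (K : Set (Euc d)) (μ : Measure (Euc d)) : Prop :=
  IsProbabilityMeasure μ ∧ μ Kᶜ = 0

/-- The SW-JKO objective. -/
def JJ {d : ℕ} (τ : ℝ) (μk : Measure (Euc d)) (F : Measure (Euc d) → ℝ)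
    (μ : Measure (Euc d)) : ℝ :=
  (SW2sq μ μk).toReal / (2 * τ) + F μ
set_option linter.unusedSectionVars false

section Wass

variable {X Y : Type*} [NormedAddCommGroup X] [MeasurableSpace X] [BorelSpace X]
  [SecondCountableTopology X]
  [NormedAddCommGroup Y] [MeasurableSpace Y] [BorelSpace Y] [SecondCountableTopology Y]

lemma W2sq_le_of_coupling {μ ν : Measure X}
    (γ : Measure (X × X)) (h1 : γ.map Prod.fst = μ) (h2 : γ.map Prod.snd = ν) :
    W2sq μ ν ≤ ∫⁻ p, ENNReal.ofReal (‖p.1 - p.2‖ ^ 2) ∂γ :=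
  iInf₂_le γ ⟨h1, h2⟩

lemma cost_measurable : Measurable (fun p : X × X => ENNReal.ofReal (‖p.1 - p.2‖ ^ 2)) :=
  ((measurable_fst.sub measurable_snd).norm.pow_const 2).ennreal_ofReal

lemma W2sq_map_le (μ ν : Measure X) [IsProbabilityMeasure μ] [IsProbabilityMeasure ν]
    {f : X → Y} (hf : Measurable f) {c : ℝ≥0∞} (hc : c ≠ ∞)
    (hb : ∀ x y : X, ENNReal.ofReal (‖f x - f y‖ ^ 2) ≤ c * ENNReal.ofReal (‖x - y‖ ^ 2)) :
    W2sq (μ.map f) (ν.map f) ≤ c * W2sq μ ν := by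
  have key : ∀ γ : Measure (X × X), γ.map Prod.fst = μ → γ.map Prod.snd = ν →
      W2sq (μ.map f) (ν.map f) ≤ c * ∫⁻ p, ENNReal.ofReal (‖p.1 - p.2‖ ^ 2) ∂γ := by
    intro γ hγ1 hγ2
    have hmm : Measurable (Prod.map f f) := hf.prodMap hf
    have h1 : (γ.map (Prod.map f f)).map Prod.fst = μ.map f := by
      rw [Measure.map_map measurable_fst hmm, show (Prod.fst ∘ Prod.map f f) = f ∘ Prod.fst from rfl,
        ← Measure.map_map hf measurable_fst, hγ1]
    have h2 : (γ.map (Prod.map f f)).map Prod.snd = ν.map f := by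
      rw [Measure.map_map measurable_snd hmm, show (Prod.snd ∘ Prod.map f f) = f ∘ Prod.snd from rfl,
        ← Measure.map_map hf measurable_snd, hγ2]
    refine (W2sq_le_of_coupling _ h1 h2).trans ?_
    rw [lintegral_map cost_measurable hmm]
    calc ∫⁻ p, ENNReal.ofReal (‖f p.1 - f p.2‖ ^ 2) ∂γ
        ≤ ∫⁻ p, c * ENNReal.ofReal (‖p.1 - p.2‖ ^ 2) ∂γ := lintegral_mono fun p => hb _ _
      _ = c * ∫⁻ p, ENNReal.ofReal (‖p.1 - p.2‖ ^ 2) ∂γ := lintegral_const_mul' _ _ hc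
  have hne : Nonempty {γ : Measure (X × X) // γ.map Prod.fst = μ ∧ γ.map Prod.snd = ν} :=
    ⟨⟨μ.prod ν, by simp, by simp⟩⟩
  have hrw : W2sq μ ν = ⨅ γ : {γ : Measure (X × X) // γ.map Prod.fst = μ ∧ γ.map Prod.snd = ν},
      ∫⁻ p, ENNReal.ofReal (‖p.1 - p.2‖ ^ 2) ∂(γ : Measure (X × X)) := by
    rw [W2sq, iInf_subtype']
    rfl
  rw [hrw, ENNReal.mul_iInf (fun h => absurd h hc)]
  exact le_iInf fun γ => key γ γ.2.1 γ.2.2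

lemma W2sq_self_dirac : W2sq (Measure.dirac (0:ℝ)) (Measure.dirac (0:ℝ)) = 0 := by
  refine le_antisymm ?_ zero_le
  have h := W2sq_le_of_coupling (μ := Measure.dirac (0:ℝ)) (ν := Measure.dirac (0:ℝ))
    (Measure.dirac ((0:ℝ), (0:ℝ)))
    (by rw [Measure.map_dirac' measurable_fst]) (by rw [Measure.map_dirac' measurable_snd])
  refine le_trans h ?_
  rw [lintegral_dirac' _ cost_measurable]
  simp

lemma W2sq_map_mul (μ ν : Measure ℝ) [IsProbabilityMeasure μ] [IsProbabilityMeasure ν] (a : ℝ) :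
    W2sq (μ.map fun t => a * t) (ν.map fun t => a * t)
      = ENNReal.ofReal (a ^ 2) * W2sq μ ν := by
  rcases eq_or_ne a 0 with rfl | ha
  · simp only [zero_mul]
    rw [Measure.map_const, Measure.map_const]
    simp [W2sq_self_dirac]
  · have hmul : ∀ b : ℝ, b ≠ 0 → ∀ (ρ σ : Measure ℝ), IsProbabilityMeasure ρ →
        IsProbabilityMeasure σ →
        W2sq (ρ.map fun t => b * t) (σ.map fun t => b * t)
          ≤ ENNReal.ofReal (b ^ 2) * W2sq ρ σ := by
      intro b hb ρ σ hρ hσ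
      refine W2sq_map_le ρ σ (measurable_const_mul b) ENNReal.ofReal_ne_top ?_
      intro x y
      have : ‖b * x - b * y‖ ^ 2 = b ^ 2 * ‖x - y‖ ^ 2 := by
        rw [← mul_sub]
        simp [Real.norm_eq_abs, abs_mul, mul_pow, sq_abs]
      rw [this, ENNReal.ofReal_mul (sq_nonneg b)]
    refine le_antisymm (hmul a ha μ ν ‹_› ‹_›) ?_
    haveI h1 : IsProbabilityMeasure (μ.map fun t => a * t) :=
      Measure.isProbabilityMeasure_map (measurable_const_mul a).aemeasurable
    haveI h2 : IsProbabilityMeasure (ν.map fun t => a * t) :=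
      Measure.isProbabilityMeasure_map (measurable_const_mul a).aemeasurable
    have h3 := hmul a⁻¹ (inv_ne_zero ha) _ _ h1 h2
    have hback : ∀ ρ : Measure ℝ, ((ρ.map fun t => a * t).map fun t => a⁻¹ * t) = ρ := by
      intro ρ
      rw [Measure.map_map (measurable_const_mul _) (measurable_const_mul _)]
      have : ((fun t => a⁻¹ * t) ∘ fun t => a * t) = id := by
        funext t; simp [Function.comp]; field_simp
      rw [this, Measure.map_id]
    rw [hback, hback] at h3
    calc ENNReal.ofReal (a ^ 2) * W2sq μ ν
        ≤ ENNReal.ofReal (a ^ 2) * (ENNReal.ofReal (a⁻¹ ^ 2) *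
            W2sq (μ.map fun t => a * t) (ν.map fun t => a * t)) := by gcongr
      _ = W2sq (μ.map fun t => a * t) (ν.map fun t => a * t) := by
          rw [← mul_assoc, ← ENNReal.ofReal_mul (sq_nonneg a)]
          have : a ^ 2 * a⁻¹ ^ 2 = 1 := by field_simp
          rw [this, ENNReal.ofReal_one, one_mul]

end Wass

lemma euc_normsq {n : ℕ} (x : Euc n) : ‖x‖ ^ 2 = ∑ i, (x i) ^ 2 := by
  rw [EuclideanSpace.norm_eq, Real.sq_sqrt (by positivity)]
  simp [Real.norm_eq_abs, sq_abs]

lemma euc_abs_le_norm {n : ℕ} (x : Euc n) (j : Fin n) : |x j| ≤ ‖x‖ := by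
  rw [← Real.sqrt_sq_eq_abs, ← Real.sqrt_sq (norm_nonneg x), euc_normsq]
  exact Real.sqrt_le_sqrt (Finset.single_le_sum (f := fun i => (x i)^2)
    (fun i _ => sq_nonneg _) (Finset.mem_univ j))

lemma axisEmbed_continuous (d : ℕ) [NeZero d] : Continuous (axisEmbed d) := by
  have : axisEmbed d = fun t : ℝ => t • EuclideanSpace.single (0 : Fin d) (1:ℝ) := by
    funext t; ext j; simp [axisEmbed, EuclideanSpace.single_apply]
  rw [this]; exact continuous_id.smul continuous_const

lemma axisEmbed_measurable (d : ℕ) [NeZero d] : Measurable (axisEmbed d) :=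
  (axisEmbed_continuous d).measurable

lemma axisEmbed_sub (d : ℕ) [NeZero d] (s t : ℝ) :
    axisEmbed d s - axisEmbed d t = axisEmbed d (s - t) := by
  ext j; by_cases h : j = 0 <;> simp [axisEmbed, EuclideanSpace.single_apply, h]

lemma W2sq_axisEmbed (d : ℕ) [NeZero d] (μ ν : Measure ℝ)
    [IsProbabilityMeasure μ] [IsProbabilityMeasure ν] :
    W2sq (μ.map (axisEmbed d)) (ν.map (axisEmbed d)) = W2sq μ ν := by
  haveI h1 : IsProbabilityMeasure (μ.map (axisEmbed d)) :=
    Measure.isProbabilityMeasure_map (axisEmbed_measurable d).aemeasurable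
  haveI h2 : IsProbabilityMeasure (ν.map (axisEmbed d)) :=
    Measure.isProbabilityMeasure_map (axisEmbed_measurable d).aemeasurable
  refine le_antisymm ?_ ?_
  · have := W2sq_map_le μ ν (axisEmbed_measurable d) (c := 1) ENNReal.one_ne_top ?_
    · simpa using this
    · intro x y
      rw [axisEmbed_sub, axisEmbed, EuclideanSpace.norm_single, one_mul, Real.norm_eq_abs, sq_abs]
  · have hg : Measurable (fun x : Euc d => x 0) := by measurability
    have hback : ∀ ρ : Measure ℝ, ((ρ.map (axisEmbed d)).map fun x : Euc d => x 0) = ρ := by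
      intro ρ
      rw [Measure.map_map hg (axisEmbed_measurable d)]
      have : ((fun x : Euc d => x 0) ∘ axisEmbed d) = id := by
        funext t; simp [axisEmbed, Function.comp, EuclideanSpace.single_apply]
      rw [this, Measure.map_id]
    have := W2sq_map_le (μ.map (axisEmbed d)) (ν.map (axisEmbed d)) hg (c := 1) ENNReal.one_ne_top ?_
    · rw [hback, hback] at this; simpa using this
    · intro x y
      rw [one_mul]
      refine ENNReal.ofReal_le_ofReal ?_
      have h := euc_abs_le_norm (x - y) 0
      calc ‖x 0 - y 0‖ ^ 2 = |(x - y) 0| ^ 2 := by rw [Real.norm_eq_abs]; rfl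
        _ ≤ ‖x - y‖ ^ 2 := by nlinarith [abs_nonneg ((x - y) 0)]

lemma map_proj_axisEmbed (d : ℕ) [NeZero d] (θ : Euc d) (μ : Measure ℝ) :
    (μ.map (axisEmbed d)).map (proj θ) = μ.map (fun t => θ 0 * t) := by
  have hp : Measurable (proj θ) := by
    have : Continuous (proj θ) := Continuous.inner continuous_const continuous_id
    exact this.measurable
  rw [Measure.map_map hp (axisEmbed_measurable d)]
  congr 1
  funext t
  simp only [Function.comp, proj, axisEmbed]
  rw [EuclideanSpace.inner_single_right]; simp [mul_comm]

lemma W2sq_lt_top (μ ν : Measure ℝ) [IsProbabilityMeasure μ] [IsProbabilityMeasure ν]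
    (h2μ : ∫⁻ x, ENNReal.ofReal (x ^ 2) ∂μ < ∞)
    (h2ν : ∫⁻ x, ENNReal.ofReal (x ^ 2) ∂ν < ∞) :
    W2sq μ ν < ∞ := by
  have hsq : Measurable fun x : ℝ => ENNReal.ofReal (x ^ 2) :=
    (measurable_id.pow_const 2).ennreal_ofReal
  refine lt_of_le_of_lt (W2sq_le_of_coupling (μ.prod ν) (by simp) (by simp)) ?_
  have hbound : ∀ p : ℝ × ℝ, ENNReal.ofReal (‖p.1 - p.2‖ ^ 2)
      ≤ 2 * ENNReal.ofReal (p.1 ^ 2) + 2 * ENNReal.ofReal (p.2 ^ 2) := by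
    intro p
    have h1 : ‖p.1 - p.2‖ ^ 2 ≤ 2 * p.1 ^ 2 + 2 * p.2 ^ 2 := by
      rw [Real.norm_eq_abs, sq_abs]; nlinarith [sq_nonneg (p.1 + p.2)]
    calc ENNReal.ofReal (‖p.1 - p.2‖ ^ 2) ≤ ENNReal.ofReal (2 * p.1 ^ 2 + 2 * p.2 ^ 2) :=
          ENNReal.ofReal_le_ofReal h1
      _ = ENNReal.ofReal (2 * p.1 ^ 2) + ENNReal.ofReal (2 * p.2 ^ 2) :=
          ENNReal.ofReal_add (by positivity) (by positivity)
      _ = 2 * ENNReal.ofReal (p.1 ^ 2) + 2 * ENNReal.ofReal (p.2 ^ 2) := by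
          rw [ENNReal.ofReal_mul (by norm_num), ENNReal.ofReal_mul (by norm_num)]
          norm_num
  refine lt_of_le_of_lt (lintegral_mono hbound) ?_
  rw [lintegral_add_left (((measurable_fst.pow_const 2).ennreal_ofReal).const_mul 2)]
  have e1 : ∫⁻ p : ℝ × ℝ, 2 * ENNReal.ofReal (p.1 ^ 2) ∂(μ.prod ν)
      = 2 * ∫⁻ x, ENNReal.ofReal (x ^ 2) ∂μ := by
    rw [lintegral_const_mul 2 ((measurable_fst.pow_const 2).ennreal_ofReal)]
    congr 1
    rw [← lintegral_map hsq measurable_fst, Measure.map_fst_prod, measure_univ, one_smul]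
  have e2 : ∫⁻ p : ℝ × ℝ, 2 * ENNReal.ofReal (p.2 ^ 2) ∂(μ.prod ν)
      = 2 * ∫⁻ x, ENNReal.ofReal (x ^ 2) ∂ν := by
    rw [lintegral_const_mul 2 ((measurable_snd.pow_const 2).ennreal_ofReal)]
    congr 1
    rw [← lintegral_map hsq measurable_snd, Measure.map_snd_prod, measure_univ, one_smul]
  rw [e1, e2]
  exact ENNReal.add_lt_top.2 ⟨ENNReal.mul_lt_top (by norm_num) h2μ,
    ENNReal.mul_lt_top (by norm_num) h2ν⟩

section Sphere

open Module

lemma haar_euc (e : ℕ) : (μH[(e:ℝ)] : Measure (Euc e)).IsAddHaarMeasure := by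
  have h := MeasureTheory.isAddHaarMeasure_hausdorffMeasure (E := Euc e)
  rwa [finrank_euclideanSpace_fin] at h

lemma cb_pos (e : ℕ) : 0 < μH[(e:ℝ)] (closedBall (0 : Euc e) 1) := by
  haveI := haar_euc e
  exact Metric.measure_closedBall_pos _ _ one_pos

lemma cb_fin (e : ℕ) : μH[(e:ℝ)] (closedBall (0 : Euc e) 1) < ∞ := by
  haveI := haar_euc e
  exact (isCompact_closedBall _ _).measure_lt_top

/-- drop the first coordinate -/
def dropFst {e : ℕ} (x : Euc (e+1)) : Euc e := WithLp.toLp 2 (fun j : Fin e => x j.succ)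

/-- prepend a coordinate -/
def consFst {e : ℕ} (r : ℝ) (y : Euc e) : Euc (e+1) := WithLp.toLp 2 (Fin.cons r (fun j => y j))

lemma consFst_zero {e : ℕ} (r : ℝ) (y : Euc e) : consFst r y 0 = r := rfl
lemma consFst_succ {e : ℕ} (r : ℝ) (y : Euc e) (j : Fin e) : consFst r y j.succ = y j := rfl
lemma dropFst_consFst {e : ℕ} (r : ℝ) (y : Euc e) : dropFst (consFst r y) = y := rfl

lemma normsq_succ {e : ℕ} (x : Euc (e+1)) : ‖x‖ ^ 2 = (x 0) ^ 2 + ‖dropFst x‖ ^ 2 := by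
  rw [euc_normsq, euc_normsq, Fin.sum_univ_succ]
  rfl

lemma dropFst_sub {e : ℕ} (x y : Euc (e+1)) : dropFst (x - y) = dropFst x - dropFst y := rfl

lemma norm_dropFst_le {e : ℕ} (x : Euc (e+1)) : ‖dropFst x‖ ≤ ‖x‖ := by
  have h := normsq_succ x
  nlinarith [norm_nonneg (dropFst x), norm_nonneg x, sq_nonneg (x 0)]

lemma dropFst_lipschitz {e : ℕ} : LipschitzWith 1 (dropFst (e := e)) := by
  refine LipschitzWith.of_dist_le_mul fun x y => ?_
  rw [NNReal.coe_one, one_mul, dist_eq_norm, dist_eq_norm, ← dropFst_sub]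
  exact norm_dropFst_le _

lemma consFst_sub {e : ℕ} (r s : ℝ) (y z : Euc e) :
    consFst r y - consFst s z = consFst (r - s) (y - z) := by
  ext j
  refine Fin.cases ?_ (fun i => ?_) j <;> rfl

lemma norm_consFst_sq {e : ℕ} (r : ℝ) (y : Euc e) : ‖consFst r y‖ ^ 2 = r ^ 2 + ‖y‖ ^ 2 := by
  rw [normsq_succ, consFst_zero, dropFst_consFst]

end Sphere

section Sphere2

def spA (e : ℕ) : Set (Euc (e+1)) := sphere 0 1 ∩ {x | ((e:ℝ)+1)⁻¹ ≤ x 0}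

lemma mem_sphere_norm {n : ℕ} (x : Euc n) : x ∈ sphere (0 : Euc n) 1 ↔ ‖x‖ = 1 := by
  simp [mem_sphere_iff_norm]

lemma spA_x0 {e : ℕ} {x : Euc (e+1)} (hx : x ∈ spA e) :
    x 0 = Real.sqrt (1 - ‖dropFst x‖ ^ 2) ∧ ((e:ℝ)+1)⁻¹ ≤ x 0 ∧ ‖dropFst x‖ ≤ 1 := by
  obtain ⟨hs, hδ⟩ := hx
  rw [mem_sphere_norm] at hs
  have hn := normsq_succ x
  rw [hs] at hn
  have h0 : (0:ℝ) < ((e:ℝ)+1)⁻¹ := by positivity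
  have hx0 : 0 ≤ x 0 := le_trans h0.le hδ
  refine ⟨?_, hδ, ?_⟩
  · have : 1 - ‖dropFst x‖ ^ 2 = (x 0) ^ 2 := by nlinarith
    rw [this, Real.sqrt_sq hx0]
  · nlinarith [norm_nonneg (dropFst x), sq_nonneg (x 0)]

lemma sqrt_lip {e : ℕ} {y z : Euc e} (hy : y ∈ dropFst '' spA e) (hz : z ∈ dropFst '' spA e) :
    |Real.sqrt (1 - ‖y‖ ^ 2) - Real.sqrt (1 - ‖z‖ ^ 2)| ≤ ((e:ℝ)+1) * ‖y - z‖ := by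
  obtain ⟨x, hx, rfl⟩ := hy
  obtain ⟨x', hx', rfl⟩ := hz
  obtain ⟨he, hδ, h1⟩ := spA_x0 hx
  obtain ⟨he', hδ', h1'⟩ := spA_x0 hx'
  set y := dropFst x
  set z := dropFst x'
  rw [← he, ← he']
  have h0 : (0:ℝ) < ((e:ℝ)+1)⁻¹ := by positivity
  have hy2 : ‖y‖ ^ 2 ≤ 1 := by
    nlinarith [norm_nonneg y, h1]
  have hz2 : ‖z‖ ^ 2 ≤ 1 := by
    nlinarith [norm_nonneg z, h1']
  have hsq : (x 0) ^ 2 = 1 - ‖y‖ ^ 2 := by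
    rw [he, Real.sq_sqrt (by linarith)]
  have hsq' : (x' 0) ^ 2 = 1 - ‖z‖ ^ 2 := by
    rw [he', Real.sq_sqrt (by linarith)]
  have hyz : |‖y‖ - ‖z‖| ≤ ‖y - z‖ := abs_norm_sub_norm_le y z
  have hkey : |x 0 - x' 0| * (x 0 + x' 0) ≤ 2 * ‖y - z‖ := by
    have e1 : |x 0 - x' 0| * (x 0 + x' 0) = |(x 0)^2 - (x' 0)^2| := by
      rw [← abs_of_nonneg (a := x 0 + x' 0) (by nlinarith), ← abs_mul]
      ring_nf
    rw [e1, hsq, hsq']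
    have e2 : |1 - ‖y‖^2 - (1 - ‖z‖^2)| = |‖z‖ - ‖y‖| * (‖z‖ + ‖y‖) := by
      rw [← abs_of_nonneg (a := ‖z‖ + ‖y‖) (by positivity), ← abs_mul]
      ring_nf
    rw [e2]
    have h2 : |‖z‖ - ‖y‖| ≤ ‖y - z‖ := by rw [abs_sub_comm]; exact hyz
    have h3 : ‖z‖ + ‖y‖ ≤ 2 := by nlinarith [norm_nonneg y, norm_nonneg z]
    nlinarith [abs_nonneg (‖z‖ - ‖y‖), norm_nonneg (y - z)]
  have hsum : 2 * ((e:ℝ)+1)⁻¹ ≤ x 0 + x' 0 := by linarith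
  have hδd : ((e:ℝ)+1)⁻¹ * ((e:ℝ)+1) = 1 := by
    field_simp
  nlinarith [abs_nonneg (x 0 - x' 0), norm_nonneg (y - z)]

lemma spA_fin (e : ℕ) : μH[(e:ℝ)] (spA e) < ∞ := by
  set f : Euc e → Euc (e+1) := fun y => consFst (Real.sqrt (1 - ‖y‖ ^ 2)) y with hf
  set s : Set (Euc e) := dropFst '' spA e with hs
  have hsub : spA e ⊆ f '' s := by
    intro x hx
    refine ⟨dropFst x, ⟨x, hx, rfl⟩, ?_⟩
    obtain ⟨he, _, _⟩ := spA_x0 hx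
    ext j
    refine Fin.cases ?_ (fun i => ?_) j
    · exact he.symm
    · rfl
  have hlip : LipschitzOnWith ((e:ℝ≥0)+2) f s := by
    refine LipschitzOnWith.of_dist_le_mul fun y hy z hz => ?_
    have hd : dist (f y) (f z) ^ 2 = (Real.sqrt (1 - ‖y‖^2) - Real.sqrt (1 - ‖z‖^2))^2
        + dist y z ^ 2 := by
      rw [dist_eq_norm, dist_eq_norm, hf]
      show ‖consFst _ y - consFst _ z‖ ^2 = _
      rw [consFst_sub, norm_consFst_sq]
    have hl := sqrt_lip hy hz
    have hK : ((((e:ℝ≥0)+2 : ℝ≥0)) : ℝ) = (e:ℝ)+2 := by push_cast; ring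
    rw [hK]
    have hdn : 0 ≤ dist (f y) (f z) := dist_nonneg
    have hdn2 : 0 ≤ dist y z := dist_nonneg
    have hyz : ‖y - z‖ = dist y z := (dist_eq_norm y z).symm
    rw [hyz] at hl
    nlinarith [abs_nonneg (Real.sqrt (1 - ‖y‖^2) - Real.sqrt (1 - ‖z‖^2)),
      sq_abs (Real.sqrt (1 - ‖y‖^2) - Real.sqrt (1 - ‖z‖^2))]
  have hscb : s ⊆ closedBall (0 : Euc e) 1 := by
    rintro y ⟨x, hx, rfl⟩
    obtain ⟨_, _, h1⟩ := spA_x0 hx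
    simpa [mem_closedBall, dist_eq_norm] using h1
  calc μH[(e:ℝ)] (spA e) ≤ μH[(e:ℝ)] (f '' s) := measure_mono hsub
    _ ≤ ((e:ℝ≥0)+2) ^ (e:ℝ) * μH[(e:ℝ)] s :=
        hlip.hausdorffMeasure_image_le (by positivity)
    _ ≤ ((e:ℝ≥0)+2) ^ (e:ℝ) * μH[(e:ℝ)] (closedBall (0 : Euc e) 1) := by
        exact mul_le_mul_right (measure_mono hscb) _
    _ < ∞ := ENNReal.mul_lt_top
        (ENNReal.rpow_lt_top_of_nonneg (by positivity) ENNReal.coe_ne_top) (cb_fin e)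

end Sphere2

section Sphere3

/-- coordinate permutation isometry -/
def swapIso (n : ℕ) (i : Fin n) [NeZero n] : Euc n ≃ᵢ Euc n :=
  (LinearIsometryEquiv.piLpCongrLeft 2 ℝ ℝ (Equiv.swap (0 : Fin n) i)).toIsometryEquiv

lemma swapIso_apply {n : ℕ} [NeZero n] (i : Fin n) (x : Euc n) (j : Fin n) :
    swapIso n i x j = x (Equiv.swap (0 : Fin n) i j) := by
  simp [swapIso, LinearIsometryEquiv.piLpCongrLeft_apply, Equiv.piCongrLeft'_apply,
    Equiv.symm_symm, Equiv.swap_apply_def]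

lemma swapIso_norm {n : ℕ} [NeZero n] (i : Fin n) (x : Euc n) : ‖swapIso n i x‖ = ‖x‖ :=
  (LinearIsometryEquiv.piLpCongrLeft 2 ℝ ℝ (Equiv.swap (0 : Fin n) i)).norm_map x

def negIso (n : ℕ) : Euc n ≃ᵢ Euc n :=
  (LinearIsometryEquiv.neg ℝ (E := Euc n)).toIsometryEquiv

lemma negIso_apply {n : ℕ} (x : Euc n) : negIso n x = -x := rfl

lemma sphere_cover (e : ℕ) (x : Euc (e+1)) (hx : x ∈ sphere (0 : Euc (e+1)) 1) :
    ∃ i : Fin (e+1), ((e:ℝ)+1)⁻¹ ≤ x i ∨ ((e:ℝ)+1)⁻¹ ≤ -(x i) := by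
  rw [mem_sphere_norm] at hx
  have hsum : ∑ i, (x i)^2 = 1 := by rw [← euc_normsq, hx]; norm_num
  have hcard : ∑ _i : Fin (e+1), (((e:ℝ)+1)⁻¹ : ℝ) = 1 := by
    rw [Finset.sum_const, Finset.card_univ, Fintype.card_fin]
    rw [nsmul_eq_mul]; push_cast; field_simp
  have hex : ∃ i ∈ Finset.univ, (((e:ℝ)+1)⁻¹ : ℝ) ≤ (x i)^2 := by
    by_contra hcon
    push_neg at hcon
    have : ∑ i, (x i)^2 < ∑ _i : Fin (e+1), (((e:ℝ)+1)⁻¹ : ℝ) :=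
      Finset.sum_lt_sum_of_nonempty ⟨0, Finset.mem_univ 0⟩ fun i hi => hcon i hi
    rw [hsum, hcard] at this
    exact lt_irrefl _ this
  obtain ⟨i, _, hi⟩ := hex
  refine ⟨i, ?_⟩
  have h0 : (0:ℝ) < (e:ℝ)+1 := by positivity
  have habs : ((e:ℝ)+1)⁻¹ ≤ |x i| := by
    rw [← Real.sqrt_sq_eq_abs]
    have h1 : ((e:ℝ)+1)⁻¹ = Real.sqrt ((((e:ℝ)+1)⁻¹)^2) := by
      rw [Real.sqrt_sq (by positivity)]
    rw [h1]
    refine Real.sqrt_le_sqrt ?_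
    have h2 : (((e:ℝ)+1)⁻¹)^2 ≤ ((e:ℝ)+1)⁻¹ := by
      have hδd : ((e:ℝ)+1)⁻¹ * ((e:ℝ)+1) = 1 := by field_simp
      nlinarith [inv_nonneg.2 h0.le, Nat.cast_nonneg (α := ℝ) e,
        mul_nonneg (inv_nonneg.2 h0.le) (Nat.cast_nonneg (α := ℝ) e)]
    linarith
  rcases abs_cases (x i) with ⟨h, _⟩ | ⟨h, _⟩
  · exact Or.inl (h ▸ habs)
  · exact Or.inr (by rw [h] at habs; linarith [habs])

lemma sphere_measure_fin (e : ℕ) : μH[(e:ℝ)] (sphere (0 : Euc (e+1)) 1) < ∞ := by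
  classical
  set Bp : Fin (e+1) → Set (Euc (e+1)) :=
    fun i => sphere 0 1 ∩ {x | ((e:ℝ)+1)⁻¹ ≤ x i} with hBp
  set Bm : Fin (e+1) → Set (Euc (e+1)) :=
    fun i => sphere 0 1 ∩ {x | ((e:ℝ)+1)⁻¹ ≤ -(x i)} with hBm
  have hcov : sphere (0 : Euc (e+1)) 1 ⊆ ⋃ i, (Bp i ∪ Bm i) := by
    intro x hx
    obtain ⟨i, hi | hi⟩ := sphere_cover e x hx
    · exact Set.mem_iUnion.2 ⟨i, Or.inl ⟨hx, hi⟩⟩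
    · exact Set.mem_iUnion.2 ⟨i, Or.inr ⟨hx, hi⟩⟩
  have hBp_eq : ∀ i, μH[(e:ℝ)] (Bp i) = μH[(e:ℝ)] (spA e) := by
    intro i
    have hpre : (swapIso (e+1) i) ⁻¹' (Bp i) = spA e := by
      ext x
      simp only [Set.mem_preimage, hBp, Set.mem_inter_iff, Set.mem_setOf_eq, spA,
        mem_sphere_norm]
      constructor
      · rintro ⟨h1, h2⟩
        refine ⟨by rwa [swapIso_norm i x] at h1, ?_⟩
        rwa [swapIso_apply, Equiv.swap_apply_right] at h2
      · rintro ⟨h1, h2⟩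
        refine ⟨by rwa [swapIso_norm i x], ?_⟩
        rwa [swapIso_apply, Equiv.swap_apply_right]
    rw [← (swapIso (e+1) i).hausdorffMeasure_preimage (e:ℝ) (Bp i), hpre]
  have hBm_eq : ∀ i, μH[(e:ℝ)] (Bm i) = μH[(e:ℝ)] (Bp i) := by
    intro i
    have hpre : (negIso (e+1)) ⁻¹' (Bp i) = Bm i := by
      ext x
      simp only [Set.mem_preimage, hBp, hBm, Set.mem_inter_iff, Set.mem_setOf_eq,
        mem_sphere_norm, negIso_apply]
      simp [norm_neg]
    rw [← (negIso (e+1)).hausdorffMeasure_preimage (e:ℝ) (Bp i), hpre]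
  refine lt_of_le_of_lt (measure_mono hcov) (lt_of_le_of_lt (measure_iUnion_le _) ?_)
  rw [tsum_fintype]
  have hterm : ∀ i : Fin (e+1), μH[(e:ℝ)] (Bp i ∪ Bm i) < ∞ := by
    intro i
    refine lt_of_le_of_lt (measure_union_le _ _) ?_
    rw [hBp_eq, hBm_eq, hBp_eq]
    exact ENNReal.add_lt_top.2 ⟨spA_fin e, spA_fin e⟩
  exact ENNReal.sum_lt_top.2 fun i _ => hterm i

lemma sphere_measure_pos (e : ℕ) : 0 < μH[(e:ℝ)] (sphere (0 : Euc (e+1)) 1) := by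
  have hsub : closedBall (0 : Euc e) 1 ⊆ dropFst '' sphere (0 : Euc (e+1)) 1 := by
    intro y hy
    rw [mem_closedBall, dist_eq_norm, sub_zero] at hy
    have hy2 : ‖y‖ ^ 2 ≤ 1 := by nlinarith [norm_nonneg y]
    refine ⟨consFst (Real.sqrt (1 - ‖y‖^2)) y, ?_, rfl⟩
    rw [mem_sphere_norm]
    have h1 : ‖consFst (Real.sqrt (1 - ‖y‖^2)) y‖ ^ 2 = 1 := by
      rw [norm_consFst_sq, Real.sq_sqrt (by linarith)]
      ring
    have h2 := norm_nonneg (consFst (Real.sqrt (1 - ‖y‖^2)) y)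
    nlinarith
  have h1 := dropFst_lipschitz.hausdorffMeasure_image_le (d := (e:ℝ)) (by positivity)
    (sphere (0 : Euc (e+1)) 1)
  have h2 : μH[(e:ℝ)] (closedBall (0 : Euc e) 1)
      ≤ μH[(e:ℝ)] (sphere (0 : Euc (e+1)) 1) := by
    refine le_trans (measure_mono hsub) (le_trans h1 ?_)
    simp
  exact lt_of_lt_of_le (cb_pos e) h2

end Sphere3

section Integrals

lemma coord_measurable {n : ℕ} (i : Fin n) :
    Measurable (fun θ : Euc n => ENNReal.ofReal ((θ i)^2)) := by
  have h : Measurable (fun θ : Euc n => θ i) := by measurability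
  exact (h.pow_const 2).ennreal_ofReal

lemma restrict_map_iso {n : ℕ} (E : Euc n ≃ᵢ Euc n)
    (hE : E ⁻¹' (sphere (0:Euc n) 1) = sphere 0 1) (d : ℝ) :
    (μH[d].restrict (sphere (0:Euc n) 1)).map E = μH[d].restrict (sphere (0:Euc n) 1) := by
  have hEm : Measurable E := E.continuous.measurable
  have hs : MeasurableSet (sphere (0:Euc n) 1) := (isClosed_sphere).measurableSet
  conv_lhs => rw [← hE]
  rw [← Measure.restrict_map hEm hs, E.map_hausdorffMeasure]

lemma coord_int_eq (e : ℕ) (i : Fin (e+1)) :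
    ∫⁻ θ, ENNReal.ofReal ((θ i)^2) ∂(sphereUniform (e+1))
      = ∫⁻ θ, ENNReal.ofReal ((θ 0)^2) ∂(sphereUniform (e+1)) := by
  rw [sphereUniform, lintegral_smul_measure, lintegral_smul_measure]
  congr 1
  set m := (μH[((e+1:ℕ):ℝ)-1] : Measure (Euc (e+1))).restrict (sphere 0 1) with hm
  set E := swapIso (e+1) i with hEdef
  have hE : E ⁻¹' (sphere (0:Euc (e+1)) 1) = sphere 0 1 := by
    ext x
    simp only [Set.mem_preimage, mem_sphere_norm]
    rw [hEdef, swapIso_norm]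
  have hmap : m.map E = m := restrict_map_iso E hE _
  conv_lhs => rw [← hmap]
  rw [lintegral_map (coord_measurable i) (E.continuous.measurable)]
  congr 1
  funext θ
  congr 2
  rw [hEdef, swapIso_apply, Equiv.swap_apply_right]

lemma sum_coord_int (e : ℕ) :
    ∑ i : Fin (e+1), ∫⁻ θ, ENNReal.ofReal ((θ i)^2) ∂(sphereUniform (e+1)) = 1 := by
  have hexp : ((e+1:ℕ):ℝ) - 1 = (e:ℝ) := by push_cast; ring
  rw [← lintegral_finset_sum _ (fun i _ => coord_measurable i)]
  have hpt : ∀ θ : Euc (e+1), ∑ i, ENNReal.ofReal ((θ i)^2) = ENNReal.ofReal (‖θ‖^2) := by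
    intro θ
    rw [euc_normsq, ← ENNReal.ofReal_sum_of_nonneg (fun i _ => sq_nonneg _)]
  rw [lintegral_congr hpt, sphereUniform, lintegral_smul_measure]
  have h1 : ∫⁻ θ in sphere (0:Euc (e+1)) 1, ENNReal.ofReal (‖θ‖^2) ∂(μH[((e+1:ℕ):ℝ)-1])
      = μH[((e+1:ℕ):ℝ)-1] (sphere (0:Euc (e+1)) 1) := by
    have hs : MeasurableSet (sphere (0:Euc (e+1)) 1) := (isClosed_sphere).measurableSet
    rw [setLIntegral_congr_fun hs (fun θ hθ => ?_), setLIntegral_one]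
    rw [mem_sphere_norm] at hθ
    rw [hθ]
    norm_num
  rw [h1]
  have hpos : 0 < μH[((e+1:ℕ):ℝ)-1] (sphere (0:Euc (e+1)) 1) := by
    rw [hexp]; exact sphere_measure_pos e
  have hfin : μH[((e+1:ℕ):ℝ)-1] (sphere (0:Euc (e+1)) 1) < ∞ := by
    rw [hexp]; exact sphere_measure_fin e
  exact ENNReal.inv_mul_cancel hpos.ne' hfin.ne

lemma coord_int_val (e : ℕ) :
    ∫⁻ θ, ENNReal.ofReal ((θ 0)^2) ∂(sphereUniform (e+1)) = (((e:ℝ≥0∞)+1))⁻¹ := by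
  have hsum := sum_coord_int e
  have heq : ∀ i : Fin (e+1), ∫⁻ θ, ENNReal.ofReal ((θ i)^2) ∂(sphereUniform (e+1))
      = ∫⁻ θ, ENNReal.ofReal ((θ 0)^2) ∂(sphereUniform (e+1)) := coord_int_eq e
  rw [Finset.sum_congr rfl (fun i _ => heq i), Finset.sum_const, Finset.card_univ,
    Fintype.card_fin, nsmul_eq_mul] at hsum
  have hne : ((e+1:ℕ) : ℝ≥0∞) ≠ 0 := by simp
  have hnt : ((e+1:ℕ) : ℝ≥0∞) ≠ ∞ := by simp
  calc ∫⁻ θ, ENNReal.ofReal ((θ 0)^2) ∂(sphereUniform (e+1))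
      = ((e+1:ℕ) : ℝ≥0∞)⁻¹ * (((e+1:ℕ) : ℝ≥0∞) *
          ∫⁻ θ, ENNReal.ofReal ((θ 0)^2) ∂(sphereUniform (e+1))) := by
        rw [← mul_assoc, ENNReal.inv_mul_cancel hne hnt, one_mul]
    _ = ((e+1:ℕ) : ℝ≥0∞)⁻¹ * 1 := by rw [hsum]
    _ = (((e:ℝ≥0∞)+1))⁻¹ := by rw [mul_one]; congr 1; push_cast; ring

end Integrals

theorem stmt2 {d : ℕ} [NeZero d] (μ₁ ν₁ : Measure ℝ)
    [IsProbabilityMeasure μ₁] [IsProbabilityMeasure ν₁]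
    (h2μ : ∫⁻ x, ENNReal.ofReal (x ^ 2) ∂μ₁ < ∞)
    (h2ν : ∫⁻ x, ENNReal.ofReal (x ^ 2) ∂ν₁ < ∞) :
    SW2sq (μ₁.map (axisEmbed d)) (ν₁.map (axisEmbed d))
      = W2sq (μ₁.map (axisEmbed d)) (ν₁.map (axisEmbed d)) / (d : ℝ≥0∞) := by
  obtain ⟨e, rfl⟩ : ∃ e, d = e + 1 :=
    ⟨d - 1, (Nat.succ_pred_eq_of_pos (Nat.pos_of_ne_zero (NeZero.ne d))).symm⟩
  have hW : W2sq μ₁ ν₁ ≠ ∞ := (W2sq_lt_top μ₁ ν₁ h2μ h2ν).ne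
  have hpt : ∀ θ : Euc (e+1),
      W2sq ((μ₁.map (axisEmbed (e+1))).map (proj θ)) ((ν₁.map (axisEmbed (e+1))).map (proj θ))
        = ENNReal.ofReal ((θ 0)^2) * W2sq μ₁ ν₁ := by
    intro θ
    rw [map_proj_axisEmbed, map_proj_axisEmbed, W2sq_map_mul]
  rw [SW2sq, lintegral_congr hpt, W2sq_axisEmbed]
  have hconst : ∫⁻ θ, ENNReal.ofReal ((θ 0)^2) * W2sq μ₁ ν₁ ∂(sphereUniform (e+1))
      = (∫⁻ θ, ENNReal.ofReal ((θ 0)^2) ∂(sphereUniform (e+1))) * W2sq μ₁ ν₁ :=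
    lintegral_mul_const _ (coord_measurable 0)
  rw [hconst, coord_int_val, div_eq_mul_inv, mul_comm]
  congr 1
  push_cast
  ring
end
end

section
/- For all μ, ν ∈ 𝒫₂(ℝ^d), SW₂²(μ,ν) ≤ (1/d) W₂²(μ,ν). -/
open MeasureTheory Metric ProbabilityTheory
open scoped ENNReal NNReal RealInnerProductSpace Topology

noncomputable section

lemma sphereUniform_map {d : ℕ} (A : Euc d ≃ₗᵢ[ℝ] Euc d) :
    (sphereUniform d).map A = sphereUniform d := by
  unfold sphereUniform
  rw [Measure.map_smul]
  congr 1
  have hme : MeasurableEmbedding (A : Euc d → Euc d) :=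
    A.toHomeomorph.measurableEmbedding
  have hpre : (A : Euc d → Euc d) ⁻¹' (sphere (0 : Euc d) 1) = sphere (0 : Euc d) 1 := by
    ext x; simp [mem_sphere_iff_norm, A.norm_map]
  rw [← hpre, ← hme.restrict_map, A.isometry.map_hausdorffMeasure (Or.inr A.surjective),
    A.surjective.range_eq, Measure.restrict_univ, hpre]

lemma meas_inner_sq {d : ℕ} (w : Euc d) :
    Measurable fun θ : Euc d => ENNReal.ofReal (⟪θ, w⟫ ^ 2) :=
  (ENNReal.continuous_ofReal.comp (((continuous_id.inner continuous_const)).pow 2)).measurable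

lemma exists_basis_head {d : ℕ} (hd : 0 < d) {u : Euc d} (hu : ‖u‖ = 1) :
    ∃ b : OrthonormalBasis (Fin d) ℝ (Euc d), b ⟨0, hd⟩ = u := by
  have hcard : Module.finrank ℝ (Euc d) = Fintype.card (Fin d) := by simp
  have horth : Orthonormal ℝ (Set.restrict {(⟨0, hd⟩ : Fin d)} fun _ => u) := by
    constructor
    · intro i; exact hu
    · intro i j hij; exact absurd (Subsingleton.elim i j) hij
  obtain ⟨b, hb⟩ := horth.exists_orthonormalBasis_extension_of_card_eq hcard
  exact ⟨b, hb _ rfl⟩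

lemma lintegral_inner_sq_eq {d : ℕ} (hd : 0 < d) {u w : Euc d} (hu : ‖u‖ = 1) (hw : ‖w‖ = 1) :
    ∫⁻ θ, ENNReal.ofReal (⟪θ, u⟫ ^ 2) ∂(sphereUniform d)
      = ∫⁻ θ, ENNReal.ofReal (⟪θ, w⟫ ^ 2) ∂(sphereUniform d) := by
  obtain ⟨b, hb⟩ := exists_basis_head hd hu
  obtain ⟨c, hc⟩ := exists_basis_head hd hw
  set A : Euc d ≃ₗᵢ[ℝ] Euc d := c.repr.trans b.repr.symm with hA
  have hAw : A w = u := by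
    rw [hA]
    simp only [LinearIsometryEquiv.trans_apply]
    rw [← hc, c.repr_self, ← hb, b.repr_symm_single]
  have hinner : ∀ θ, ⟪θ, u⟫ = ⟪A.symm θ, w⟫ := by
    intro θ
    rw [← hAw, ← A.inner_map_map (A.symm θ) w, A.apply_symm_apply]
  calc ∫⁻ θ, ENNReal.ofReal (⟪θ, u⟫ ^ 2) ∂(sphereUniform d)
      = ∫⁻ θ, ENNReal.ofReal (⟪A.symm θ, w⟫ ^ 2) ∂(sphereUniform d) := by
        simp_rw [hinner]
    _ = ∫⁻ θ, ENNReal.ofReal (⟪θ, w⟫ ^ 2) ∂((sphereUniform d).map A.symm) := by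
        rw [lintegral_map (meas_inner_sq w) A.symm.continuous.measurable]
    _ = _ := by rw [sphereUniform_map]

lemma sphereUniform_isProb {d : ℕ} (h0 : μH[(d : ℝ) - 1] (sphere (0 : Euc d) 1) ≠ 0)
    (htop : μH[(d : ℝ) - 1] (sphere (0 : Euc d) 1) ≠ ∞) :
    IsProbabilityMeasure (sphereUniform d) := by
  constructor
  unfold sphereUniform
  rw [Measure.smul_apply, Measure.restrict_apply_univ, smul_eq_mul,
    ENNReal.inv_mul_cancel h0 htop]

lemma lintegral_norm_sq_sphere {d : ℕ}
    (h0 : μH[(d : ℝ) - 1] (sphere (0 : Euc d) 1) ≠ 0)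
    (htop : μH[(d : ℝ) - 1] (sphere (0 : Euc d) 1) ≠ ∞) :
    ∫⁻ θ, ENNReal.ofReal (‖θ‖ ^ 2) ∂(sphereUniform d) = 1 := by
  unfold sphereUniform
  rw [lintegral_smul_measure]
  rw [setLIntegral_congr_fun isClosed_sphere.measurableSet
    (fun x hx => ?_), setLIntegral_one]
  exact ENNReal.inv_mul_cancel h0 htop
  rw [mem_sphere_iff_norm, sub_zero] at hx
  simp [hx]

lemma sum_inner_single_sq {d : ℕ} (θ : Euc d) :
    ∑ i : Fin d, ⟪θ, EuclideanSpace.single i (1:ℝ)⟫ ^ 2 = ‖θ‖ ^ 2 := by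
  have : ∀ i, ⟪θ, EuclideanSpace.single i (1:ℝ)⟫ = θ i := by
    intro i
    rw [real_inner_comm, EuclideanSpace.inner_single_left]
    simp
  simp_rw [this, EuclideanSpace.norm_eq]
  rw [Real.sq_sqrt (by positivity)]
  simp [sq_abs]

lemma lintegral_inner_sq {d : ℕ} (hd : 0 < d)
    (h0 : μH[(d : ℝ) - 1] (sphere (0 : Euc d) 1) ≠ 0)
    (htop : μH[(d : ℝ) - 1] (sphere (0 : Euc d) 1) ≠ ∞) (v : Euc d) :
    ∫⁻ θ, ENNReal.ofReal (⟪θ, v⟫ ^ 2) ∂(sphereUniform d)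
      = ENNReal.ofReal (‖v‖ ^ 2) / d := by
  have e : ∀ i : Fin d, ‖EuclideanSpace.single i (1:ℝ)‖ = 1 := by
    intro i; rw [EuclideanSpace.norm_single]; norm_num
  set i0 : Fin d := ⟨0, hd⟩
  set κ := ∫⁻ θ, ENNReal.ofReal (⟪θ, EuclideanSpace.single i0 (1:ℝ)⟫ ^ 2) ∂(sphereUniform d)
    with hκ
  have hsum : (d : ℝ≥0∞) * κ = 1 := by
    have : ∀ i : Fin d,
        ∫⁻ θ, ENNReal.ofReal (⟪θ, EuclideanSpace.single i (1:ℝ)⟫ ^ 2) ∂(sphereUniform d) = κ :=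
      fun i => lintegral_inner_sq_eq hd (e i) (e i0)
    calc (d : ℝ≥0∞) * κ
        = ∑ i : Fin d,
            ∫⁻ θ, ENNReal.ofReal (⟪θ, EuclideanSpace.single i (1:ℝ)⟫ ^ 2) ∂(sphereUniform d) := by
          rw [Finset.sum_congr rfl fun i _ => this i, Finset.sum_const, Finset.card_univ,
            Fintype.card_fin, nsmul_eq_mul]
      _ = ∫⁻ θ, ∑ i : Fin d, ENNReal.ofReal (⟪θ, EuclideanSpace.single i (1:ℝ)⟫ ^ 2)
            ∂(sphereUniform d) := by
          rw [lintegral_finset_sum]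
          exact fun i _ => meas_inner_sq _
      _ = ∫⁻ θ, ENNReal.ofReal (‖θ‖ ^ 2) ∂(sphereUniform d) := by
          congr 1; ext θ
          rw [← ENNReal.ofReal_sum_of_nonneg (fun i _ => sq_nonneg _), sum_inner_single_sq]
      _ = 1 := lintegral_norm_sq_sphere h0 htop
  have hκval : κ = 1 / d := by
    rw [← hsum, mul_comm, mul_div_assoc, ENNReal.div_self (by exact_mod_cast hd.ne') (by simp),
      mul_one]
  rcases eq_or_ne v 0 with rfl | hv
  · simp
  · have hnv : ‖v‖ ≠ 0 := norm_ne_zero_iff.mpr hv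
    have hunit : ‖(‖v‖⁻¹ • v : Euc d)‖ = 1 := by
      rw [norm_smul]; simp [abs_of_nonneg (norm_nonneg v), inv_mul_cancel₀ hnv]
    have hv' : v = ‖v‖ • (‖v‖⁻¹ • v) := by rw [smul_smul, mul_inv_cancel₀ hnv, one_smul]
    calc ∫⁻ θ, ENNReal.ofReal (⟪θ, v⟫ ^ 2) ∂(sphereUniform d)
        = ∫⁻ θ, ENNReal.ofReal (‖v‖ ^ 2) * ENNReal.ofReal (⟪θ, ‖v‖⁻¹ • v⟫ ^ 2)
            ∂(sphereUniform d) := by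
          congr 1; ext θ
          rw [← ENNReal.ofReal_mul (sq_nonneg _)]
          congr 1
          conv_lhs => rw [hv']
          rw [real_inner_smul_right]
          ring
      _ = ENNReal.ofReal (‖v‖ ^ 2) * κ := by
          rw [lintegral_const_mul _ (meas_inner_sq _)]
          rw [lintegral_inner_sq_eq hd hunit (e i0), hκ]
      _ = ENNReal.ofReal (‖v‖ ^ 2) / d := by
          rw [hκval, one_div, div_eq_mul_inv]

lemma sphereUniform_eq_zero {d : ℕ}
    (h : μH[(d : ℝ) - 1] (sphere (0 : Euc d) 1) = 0 ∨
      μH[(d : ℝ) - 1] (sphere (0 : Euc d) 1) = ∞) :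
    sphereUniform d = 0 := by
  unfold sphereUniform
  rcases h with h | h
  · rw [Measure.restrict_eq_zero.mpr h, smul_zero]
  · rw [h, ENNReal.inv_top, zero_smul]

theorem stmt7 {d : ℕ} (hd : 0 < d) (μ ν : Measure (Euc d))
    [IsProbabilityMeasure μ] [IsProbabilityMeasure ν]
    (h2μ : ∫⁻ x, ENNReal.ofReal (‖x‖ ^ 2) ∂μ < ∞)
    (h2ν : ∫⁻ x, ENNReal.ofReal (‖x‖ ^ 2) ∂ν < ∞) :
    SW2sq μ ν ≤ W2sq μ ν / (d : ℝ≥0∞) := by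
  by_cases hS : μH[(d : ℝ) - 1] (sphere (0 : Euc d) 1) = 0 ∨
      μH[(d : ℝ) - 1] (sphere (0 : Euc d) 1) = ∞
  · rw [SW2sq, sphereUniform_eq_zero hS, lintegral_zero_measure]
    exact bot_le
  push_neg at hS
  obtain ⟨h0, htop⟩ := hS
  haveI hlam : IsProbabilityMeasure (sphereUniform d) := sphereUniform_isProb h0 htop
  have hd0 : (d : ℝ≥0∞) ≠ 0 := by exact_mod_cast hd.ne'
  have hdtop : (d : ℝ≥0∞) ≠ ∞ := ENNReal.natCast_ne_top d
  rw [ENNReal.le_div_iff_mul_le (Or.inl hd0) (Or.inl hdtop), W2sq]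
  refine le_iInf₂ fun γ hγ => ?_
  obtain ⟨hγ1, hγ2⟩ := hγ
  haveI hγp : IsProbabilityMeasure γ := by
    constructor
    have : (γ.map Prod.fst) Set.univ = 1 := by rw [hγ1]; exact measure_univ
    rwa [Measure.map_apply measurable_fst MeasurableSet.univ, Set.preimage_univ] at this
  have hproj : ∀ θ : Euc d, Measurable (proj θ) := fun θ =>
    (continuous_const.inner continuous_id).measurable
  -- pointwise bound in θ
  have step1 : ∀ θ : Euc d, W2sq (μ.map (proj θ)) (ν.map (proj θ))
      ≤ ∫⁻ p, ENNReal.ofReal (⟪θ, p.1 - p.2⟫ ^ 2) ∂γ := by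
    intro θ
    have hf : Measurable (Prod.map (proj θ) (proj θ)) := (hproj θ).prodMap (hproj θ)
    have hfst : (γ.map (Prod.map (proj θ) (proj θ))).map Prod.fst = μ.map (proj θ) := by
      rw [Measure.map_map measurable_fst hf]
      have : (Prod.fst ∘ Prod.map (proj θ) (proj θ)) = proj θ ∘ Prod.fst := rfl
      rw [this, ← Measure.map_map (hproj θ) measurable_fst, hγ1]
    have hsnd : (γ.map (Prod.map (proj θ) (proj θ))).map Prod.snd = ν.map (proj θ) := by
      rw [Measure.map_map measurable_snd hf]
      have : (Prod.snd ∘ Prod.map (proj θ) (proj θ)) = proj θ ∘ Prod.snd := rfl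
      rw [this, ← Measure.map_map (hproj θ) measurable_snd, hγ2]
    have hle : W2sq (μ.map (proj θ)) (ν.map (proj θ))
        ≤ ∫⁻ q, ENNReal.ofReal (‖q.1 - q.2‖ ^ 2) ∂(γ.map (Prod.map (proj θ) (proj θ))) :=
      iInf₂_le _ ⟨hfst, hsnd⟩
    refine hle.trans_eq ?_
    rw [lintegral_map (by
      exact (ENNReal.continuous_ofReal.comp
        ((continuous_fst.sub continuous_snd).norm.pow 2)).measurable) hf]
    refine lintegral_congr fun p => ?_
    simp only [Prod.map_fst, Prod.map_snd, proj]
    rw [Real.norm_eq_abs, sq_abs, inner_sub_right]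
  -- integrate over θ and swap
  have hFmeas : Measurable fun q : Euc d × (Euc d × Euc d) =>
      ENNReal.ofReal (⟪q.1, q.2.1 - q.2.2⟫ ^ 2) :=
    ((measurable_fst.inner (measurable_snd.fst.sub measurable_snd.snd)).pow_const 2).ennreal_ofReal
  calc SW2sq μ ν * d
      ≤ (∫⁻ θ, ∫⁻ p, ENNReal.ofReal (⟪θ, p.1 - p.2⟫ ^ 2) ∂γ ∂(sphereUniform d)) * d := by
        gcongr
        exact lintegral_mono step1
    _ = (∫⁻ p, ∫⁻ θ, ENNReal.ofReal (⟪θ, p.1 - p.2⟫ ^ 2) ∂(sphereUniform d) ∂γ) * d := by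
        rw [lintegral_lintegral_swap hFmeas.aemeasurable]
    _ = (∫⁻ p : Euc d × Euc d, ENNReal.ofReal (‖p.1 - p.2‖ ^ 2) / d ∂γ) * d := by
        congr 1
        refine lintegral_congr fun p => ?_
        exact lintegral_inner_sq hd h0 htop _
    _ ≤ ∫⁻ p : Euc d × Euc d, ENNReal.ofReal (‖p.1 - p.2‖ ^ 2) ∂γ := by
        have hm : Measurable fun p : Euc d × Euc d => ENNReal.ofReal (‖p.1 - p.2‖ ^ 2) :=
          (ENNReal.continuous_ofReal.comp
            ((continuous_fst.sub continuous_snd).norm.pow 2)).measurable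
        simp_rw [div_eq_mul_inv]
        rw [lintegral_mul_const _ hm, mul_assoc, ENNReal.inv_mul_cancel hd0 hdtop, mul_one]
end
end
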